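/- Let m >= 2 and fix 1 <= i < j <= m. For a positive integer q, let M_D(q) be the set of tuples (x_1,...,x_m) in Z_q^m such that x_i + x_j = 0, x_s != x_t for all s != t, x_s != x_t + 1 for all s < t, and x_s != -x_t and x_s != -x_t + 1 for all s != t with {s,t} != {i,j}; and let M_B(q+2) be the set of tuples (y_1,...,y_m) in Z_{q+2}^m such that y_i + y_j = 0, y_s != 0 and y_s != 1 for all s, y_s != y_t for all s != t, y_s != y_t + 1 for all s < t, and y_s != -y_t and y_s != -y_t + 1 for all s != t with {s,t} != {i,j}. Then for every sufficiently large positive integer q, |M_D(q)| = |M_B(q+2)|. -/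
import Mathlib

namespace ShiBijAux

variable {q : ℕ}

/-- representative of `t : ZMod q` in `[1, q]`. -/
def rr (t : ZMod q) : ℕ := if t.val = 0 then q else t.val

/-- the bijection value-map. -/
def th (q : ℕ) (t : ZMod q) : ZMod (q + 2) := ((rr t + 1 : ℕ) : ZMod (q + 2))

/-- inverse of `th`. -/
def sig (q : ℕ) (u : ZMod (q + 2)) : ZMod q := ((u.val - 1 : ℕ) : ZMod q)

lemma rr_ge (t : ZMod q) (hq : 3 ≤ q) : 1 ≤ rr t := by
  unfold rr; split <;> omega

lemma rr_le (t : ZMod q) (hq : 3 ≤ q) : rr t ≤ q := by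
  haveI : NeZero q := ⟨by omega⟩
  have := ZMod.val_lt t
  unfold rr; split <;> omega

lemma cast_rr (hq : 3 ≤ q) (t : ZMod q) : ((rr t : ℕ) : ZMod q) = t := by
  haveI : NeZero q := ⟨by omega⟩
  unfold rr
  split
  · rename_i h
    rw [ZMod.natCast_self]
    exact (((ZMod.val_eq_zero t).mp h)).symm
  · exact ZMod.natCast_rightInverse t

lemma natDvdCases {M s : ℕ} (hM : 1 ≤ M) (h : M ∣ s) (h2 : s ≤ 2 * M) :
    s = 0 ∨ s = M ∨ s = 2 * M := by
  obtain ⟨k, rfl⟩ := h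
  have hk3 : k ≤ 2 := by
    by_contra hc
    push_neg at hc
    have h3 : M * 3 ≤ M * k := Nat.mul_le_mul_left M (by omega)
    omega
  interval_cases k <;> omega

lemma cast_eq_cast_iff {n : ℕ} (u v : ℕ) : ((u : ℕ) : ZMod n) = v ↔ u ≡ v [MOD n] :=
  ZMod.natCast_eq_natCast_iff u v n

lemma A1 (hq : 3 ≤ q) {a b : ZMod q} (hab : a ≠ b) :
    a + b = 0 ↔ th q a + th q b = 0 := by
  have ha1 := rr_ge a hq; have ha2 := rr_le a hq
  have hb1 := rr_ge b hq; have hb2 := rr_le b hq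
  constructor
  · intro h
    have h2 : ((rr a + rr b : ℕ) : ZMod q) = ((0 : ℕ) : ZMod q) := by
      push_cast [cast_rr hq]; exact h
    have hdvd := Nat.modEq_zero_iff_dvd.mp ((cast_eq_cast_iff _ _).mp h2)
    rcases natDvdCases (by omega) hdvd (by omega) with h0 | hq' | h2q
    · omega
    · have h3 : ((rr a + 1 + (rr b + 1) : ℕ) : ZMod (q + 2)) = ((0 : ℕ) : ZMod (q + 2)) := by
        rw [cast_eq_cast_iff]
        exact Nat.modEq_zero_iff_dvd.mpr ⟨1, by omega⟩
      unfold th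
      push_cast at h3 ⊢
      linear_combination h3
    · exfalso
      apply hab
      have hra : rr a = q := by omega
      have hrb : rr b = q := by omega
      rw [← cast_rr hq a, ← cast_rr hq b, hra, hrb]
  · intro h
    have h2 : ((rr a + 1 + (rr b + 1) : ℕ) : ZMod (q + 2)) = ((0 : ℕ) : ZMod (q + 2)) := by
      unfold th at h
      push_cast at h ⊢
      linear_combination h
    have hdvd := Nat.modEq_zero_iff_dvd.mp ((cast_eq_cast_iff _ _).mp h2)
    rcases natDvdCases (show 1 ≤ q + 2 by omega) hdvd (by omega) with h0 | hq' | h2q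
    · omega
    · have h3 : ((rr a + rr b : ℕ) : ZMod q) = ((0 : ℕ) : ZMod q) := by
        rw [cast_eq_cast_iff]
        exact Nat.modEq_zero_iff_dvd.mpr ⟨1, by omega⟩
      push_cast [cast_rr hq] at h3
      exact h3
    · omega

lemma A2 (hq : 3 ≤ q) (a b : ZMod q) :
    a + b = 1 ↔ th q a + th q b = 1 := by
  have ha1 := rr_ge a hq; have ha2 := rr_le a hq
  have hb1 := rr_ge b hq; have hb2 := rr_le b hq
  constructor
  · intro h
    have h2 : ((rr a + rr b : ℕ) : ZMod q) = ((1 : ℕ) : ZMod q) := by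
      push_cast [cast_rr hq]; exact h
    have hdvd := (Nat.modEq_iff_dvd' (by omega)).mp ((cast_eq_cast_iff _ _).mp h2).symm
    have hsum : rr a + rr b = q + 1 := by
      rcases natDvdCases (show 1 ≤ q by omega) hdvd (by omega) with h0 | hq' | h2q <;> omega
    have h3 : ((rr a + 1 + (rr b + 1) : ℕ) : ZMod (q + 2)) = ((1 : ℕ) : ZMod (q + 2)) := by
      rw [cast_eq_cast_iff]
      exact ((Nat.modEq_iff_dvd' (by omega)).mpr ⟨1, by omega⟩).symm
    unfold th
    push_cast at h3 ⊢
    linear_combination h3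
  · intro h
    have h2 : ((rr a + 1 + (rr b + 1) : ℕ) : ZMod (q + 2)) = ((1 : ℕ) : ZMod (q + 2)) := by
      unfold th at h
      push_cast at h ⊢
      linear_combination h
    have hdvd := (Nat.modEq_iff_dvd' (by omega)).mp ((cast_eq_cast_iff _ _).mp h2).symm
    have hsum : rr a + rr b = q + 1 := by
      rcases natDvdCases (show 1 ≤ q + 2 by omega) hdvd (by omega) with h0 | hq' | h2q <;> omega
    have h3 : ((rr a + rr b : ℕ) : ZMod q) = ((1 : ℕ) : ZMod q) := by
      rw [cast_eq_cast_iff]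
      exact ((Nat.modEq_iff_dvd' (by omega)).mpr ⟨1, by omega⟩).symm
    push_cast [cast_rr hq] at h3
    exact h3

lemma A3 (hq : 3 ≤ q) (a b : ZMod q) :
    th q a = th q b + 1 ↔ rr a = rr b + 1 := by
  have ha1 := rr_ge a hq; have ha2 := rr_le a hq
  have hb1 := rr_ge b hq; have hb2 := rr_le b hq
  constructor
  · intro h
    have h2 : ((rr a + 1 : ℕ) : ZMod (q + 2)) = ((rr b + 2 : ℕ) : ZMod (q + 2)) := by
      unfold th at h
      push_cast at h ⊢
      linear_combination h
    have hmod := (cast_eq_cast_iff _ _).mp h2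
    rcases le_or_gt (rr a + 1) (rr b + 2) with hle | hlt
    · have hdvd := (Nat.modEq_iff_dvd' hle).mp hmod
      rcases Nat.eq_zero_or_pos (rr b + 2 - (rr a + 1)) with h0 | hpos
      · omega
      · have := Nat.le_of_dvd hpos hdvd
        omega
    · have hdvd := (Nat.modEq_iff_dvd' (by omega)).mp hmod.symm
      have hpos : 0 < rr a + 1 - (rr b + 2) := by omega
      have := Nat.le_of_dvd hpos hdvd
      omega
  · intro h
    unfold th
    rw [h]
    push_cast
    ring

lemma A4 (hq : 3 ≤ q) (a b : ZMod q) :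
    a = b + 1 ↔ (rr a = rr b + 1 ∨ (rr a = 1 ∧ rr b = q)) := by
  have ha1 := rr_ge a hq; have ha2 := rr_le a hq
  have hb1 := rr_ge b hq; have hb2 := rr_le b hq
  constructor
  · intro h
    have h2 : ((rr a : ℕ) : ZMod q) = ((rr b + 1 : ℕ) : ZMod q) := by
      push_cast [cast_rr hq]; exact h
    have hmod := (cast_eq_cast_iff _ _).mp h2
    rcases le_or_gt (rr a) (rr b + 1) with hle | hlt
    · have hdvd := (Nat.modEq_iff_dvd' hle).mp hmod
      rcases Nat.eq_zero_or_pos (rr b + 1 - rr a) with h0 | hpos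
      · left; omega
      · have := Nat.le_of_dvd hpos hdvd
        right; omega
    · have hdvd := (Nat.modEq_iff_dvd' (by omega)).mp hmod.symm
      have hpos : 0 < rr a - (rr b + 1) := by omega
      have := Nat.le_of_dvd hpos hdvd
      omega
  · intro h
    rcases h with h | ⟨h1, h2⟩
    · rw [← cast_rr hq a, ← cast_rr hq b, h]
      push_cast
      ring
    · rw [← cast_rr hq a, ← cast_rr hq b, h1, h2]
      rw [ZMod.natCast_self]
      push_cast
      ring

lemma A5 (hq : 3 ≤ q) {a b : ZMod q} (h : th q a = th q b) : a = b := by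
  have ha1 := rr_ge a hq; have ha2 := rr_le a hq
  have hb1 := rr_ge b hq; have hb2 := rr_le b hq
  have hmod := (cast_eq_cast_iff (n := q + 2) (rr a + 1) (rr b + 1)).mp h
  have h2 : rr a = rr b := by
    have := hmod
    unfold Nat.ModEq at this
    rw [Nat.mod_eq_of_lt (by omega), Nat.mod_eq_of_lt (by omega)] at this
    omega
  rw [← cast_rr hq a, ← cast_rr hq b, h2]

lemma A6 (hq : 3 ≤ q) (t : ZMod q) : th q t ≠ 0 ∧ th q t ≠ 1 := by
  have h1 := rr_ge t hq; have h2 := rr_le t hq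
  constructor
  · intro h
    have h3 : ((rr t + 1 : ℕ) : ZMod (q + 2)) = ((0 : ℕ) : ZMod (q + 2)) := by
      unfold th at h
      push_cast at h ⊢
      exact h
    have hdvd := Nat.modEq_zero_iff_dvd.mp ((cast_eq_cast_iff _ _).mp h3)
    have := Nat.le_of_dvd (by omega) hdvd
    omega
  · intro h
    have h3 : ((rr t + 1 : ℕ) : ZMod (q + 2)) = ((1 : ℕ) : ZMod (q + 2)) := by
      unfold th at h
      push_cast at h ⊢
      exact h
    have hdvd := (Nat.modEq_iff_dvd' (by omega)).mp ((cast_eq_cast_iff _ _).mp h3).symm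
    have := Nat.le_of_dvd (by omega) hdvd
    omega

lemma A7 (hq : 3 ≤ q) {u : ZMod (q + 2)} (hu0 : u ≠ 0) (hu1 : u ≠ 1) :
    th q (sig q u) = u := by
  haveI : NeZero q := ⟨by omega⟩
  haveI : NeZero (q + 2) := ⟨by omega⟩
  have hval : u.val < q + 2 := ZMod.val_lt u
  have hv0 : u.val ≠ 0 := fun h => hu0 ((ZMod.val_eq_zero u).mp h)
  have hv1 : u.val ≠ 1 := by
    intro h
    apply hu1
    rw [← ZMod.natCast_rightInverse u, h]
    push_cast
    ring
  have hrr : rr (sig q u) = u.val - 1 := by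
    unfold sig rr
    rw [ZMod.val_natCast]
    rcases eq_or_lt_of_le (show u.val - 1 ≤ q by omega) with h | h
    · rw [h, Nat.mod_self]
      simp [h]
    · rw [Nat.mod_eq_of_lt h]
      have hne : u.val - 1 ≠ 0 := by omega
      simp [hne]
  unfold th
  rw [hrr]
  have h : u.val - 1 + 1 = u.val := by omega
  rw [h]
  exact ZMod.natCast_rightInverse u

lemma A8 (hq : 3 ≤ q) {a b : ZMod q} (h1 : rr a = 1) (h2 : rr b = q) : a + b = 1 := by
  rw [← cast_rr hq a, ← cast_rr hq b, h1, h2, ZMod.natCast_self]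
  push_cast
  ring

end ShiBijAux

open ShiBijAux in
/-- For all sufficiently large `q`, the number of points over `ZMod q` of the complement
of the restriction of the Shi arrangement of type D to `x_i + x_j = 0` equals the number
of points over `ZMod (q+2)` of the complement of the restriction of the Shi arrangement
of type B to `x_i + x_j = 0` (indices `1 ≤ i < j ≤ m`, 1-indexed). -/
theorem shi_typeD_typeB_restriction_xi_add_xj_eq_zero_card_eq (m i j : ℕ) (hm : 2 ≤ m)
    (hi1 : 1 ≤ i) (hij : i < j) (hjm : j ≤ m) :
    ∃ N : ℕ, 0 < N ∧ ∀ q : ℕ, N ≤ q →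
      {x : Fin m → ZMod q |
          x ⟨i - 1, by omega⟩ + x ⟨j - 1, by omega⟩ = 0 ∧
          (∀ s t : Fin m, s ≠ t → x s ≠ x t) ∧
          (∀ s t : Fin m, s < t → x s ≠ x t + 1) ∧
          (∀ s t : Fin m, s ≠ t →
            ¬((s = ⟨i - 1, by omega⟩ ∧ t = ⟨j - 1, by omega⟩) ∨
              (s = ⟨j - 1, by omega⟩ ∧ t = ⟨i - 1, by omega⟩)) →
            x s ≠ -x t ∧ x s ≠ -x t + 1)}.ncard =
        {y : Fin m → ZMod (q + 2) |
          y ⟨i - 1, by omega⟩ + y ⟨j - 1, by omega⟩ = 0 ∧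
          (∀ s : Fin m, y s ≠ 0 ∧ y s ≠ 1) ∧
          (∀ s t : Fin m, s ≠ t → y s ≠ y t) ∧
          (∀ s t : Fin m, s < t → y s ≠ y t + 1) ∧
          (∀ s t : Fin m, s ≠ t →
            ¬((s = ⟨i - 1, by omega⟩ ∧ t = ⟨j - 1, by omega⟩) ∨
              (s = ⟨j - 1, by omega⟩ ∧ t = ⟨i - 1, by omega⟩)) →
            y s ≠ -y t ∧ y s ≠ -y t + 1)}.ncard := by
  refine ⟨3, by norm_num, fun q hq3 => ?_⟩
  haveI : NeZero q := ⟨by omega⟩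
  haveI : Fact (1 < q + 2) := ⟨by omega⟩
  have hij' : (⟨i - 1, by omega⟩ : Fin m) ≠ ⟨j - 1, by omega⟩ := by
    simp only [ne_eq, Fin.mk.injEq]
    omega
  have hij'lt : (⟨i - 1, by omega⟩ : Fin m) < (⟨j - 1, by omega⟩ : Fin m) := by
    simp only [Fin.mk_lt_mk]
    omega
  have hinj : Function.Injective (fun (x : Fin m → ZMod q) (s : Fin m) => th q (x s)) :=
    fun x y h => funext fun s => A5 hq3 (congrFun h s)
  have himg : (fun (x : Fin m → ZMod q) (s : Fin m) => th q (x s)) ''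
      {x : Fin m → ZMod q |
          x ⟨i - 1, by omega⟩ + x ⟨j - 1, by omega⟩ = 0 ∧
          (∀ s t : Fin m, s ≠ t → x s ≠ x t) ∧
          (∀ s t : Fin m, s < t → x s ≠ x t + 1) ∧
          (∀ s t : Fin m, s ≠ t →
            ¬((s = ⟨i - 1, by omega⟩ ∧ t = ⟨j - 1, by omega⟩) ∨
              (s = ⟨j - 1, by omega⟩ ∧ t = ⟨i - 1, by omega⟩)) →
            x s ≠ -x t ∧ x s ≠ -x t + 1)} =
      {y : Fin m → ZMod (q + 2) |
          y ⟨i - 1, by omega⟩ + y ⟨j - 1, by omega⟩ = 0 ∧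
          (∀ s : Fin m, y s ≠ 0 ∧ y s ≠ 1) ∧
          (∀ s t : Fin m, s ≠ t → y s ≠ y t) ∧
          (∀ s t : Fin m, s < t → y s ≠ y t + 1) ∧
          (∀ s t : Fin m, s ≠ t →
            ¬((s = ⟨i - 1, by omega⟩ ∧ t = ⟨j - 1, by omega⟩) ∨
              (s = ⟨j - 1, by omega⟩ ∧ t = ⟨i - 1, by omega⟩)) →
            y s ≠ -y t ∧ y s ≠ -y t + 1)} := by
    ext y
    simp only [Set.mem_image, Set.mem_setOf_eq]
    constructor
    · rintro ⟨x, ⟨hx1, hx2, hx3, hx4⟩, rfl⟩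
      refine ⟨?_, ?_, ?_, ?_, ?_⟩
      · exact (A1 hq3 (hx2 _ _ hij')).mp hx1
      · intro s
        exact A6 hq3 (x s)
      · intro s t hst h
        exact hx2 s t hst (A5 hq3 h)
      · intro s t hst h
        have h' : th q (x s) = th q (x t) + 1 := h
        exact hx3 s t hst ((A4 hq3 _ _).mpr (Or.inl ((A3 hq3 _ _).mp h')))
      · intro s t hst hP
        constructor
        · intro h
          have h' : th q (x s) = -th q (x t) := h
          have hsum : th q (x s) + th q (x t) = 0 := by rw [h']; ring
          have h2 := (A1 hq3 (hx2 s t hst)).mpr hsum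
          exact (hx4 s t hst hP).1 (by linear_combination h2)
        · intro h
          have h' : th q (x s) = -th q (x t) + 1 := h
          have hsum : th q (x s) + th q (x t) = 1 := by rw [h']; ring
          have h2 := (A2 hq3 (x s) (x t)).mpr hsum
          exact (hx4 s t hst hP).2 (by linear_combination h2)
    · rintro ⟨hy1, hy0, hy2, hy3, hy4⟩
      have hxy : ∀ s : Fin m, th q (sig q (y s)) = y s :=
        fun s => A7 hq3 (hy0 s).1 (hy0 s).2
      refine ⟨fun s => sig q (y s), ⟨?_, ?_, ?_, ?_⟩, funext hxy⟩
      · show sig q (y ⟨i - 1, by omega⟩) + sig q (y ⟨j - 1, by omega⟩) = 0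
        have hab : sig q (y (⟨i - 1, by omega⟩ : Fin m)) ≠ sig q (y ⟨j - 1, by omega⟩) := by
          intro he
          exact hy2 _ _ hij' (by rw [← hxy ⟨i - 1, by omega⟩, ← hxy ⟨j - 1, by omega⟩, he])
        refine (A1 hq3 hab).mpr ?_
        rw [hxy, hxy]
        exact hy1
      · intro s t hst he
        have he' : sig q (y s) = sig q (y t) := he
        exact hy2 s t hst (by rw [← hxy s, ← hxy t, he'])
      · intro s t hst he
        have he' : sig q (y s) = sig q (y t) + 1 := he
        rcases (A4 hq3 _ _).mp he' with hsucc | ⟨h1, h2⟩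
        · exact hy3 s t hst (by rw [← hxy s, ← hxy t]; exact (A3 hq3 _ _).mpr hsucc)
        · have hsum1 : sig q (y s) + sig q (y t) = 1 := A8 hq3 h1 h2
          have hysum : y s + y t = 1 := by
            rw [← hxy s, ← hxy t]
            exact (A2 hq3 _ _).mp hsum1
          by_cases hP : ((s = (⟨i - 1, by omega⟩ : Fin m) ∧ t = ⟨j - 1, by omega⟩) ∨
              (s = (⟨j - 1, by omega⟩ : Fin m) ∧ t = ⟨i - 1, by omega⟩))
          · rcases hP with ⟨hs, ht⟩ | ⟨hs, ht⟩
            · rw [hs, ht, hy1] at hysum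
              exact zero_ne_one hysum
            · rw [hs, ht] at hst
              exact absurd hst (lt_asymm hij'lt)
          · exact (hy4 s t (ne_of_lt hst) hP).2 (by linear_combination hysum)
      · intro s t hst hP
        have hab : sig q (y s) ≠ sig q (y t) := by
          intro he
          exact hy2 s t hst (by rw [← hxy s, ← hxy t, he])
        constructor
        · intro he
          have he' : sig q (y s) = -(sig q (y t)) := he
          have hsum : sig q (y s) + sig q (y t) = 0 := by rw [he']; ring
          have h2 := (A1 hq3 hab).mp hsum
          rw [hxy, hxy] at h2
          exact (hy4 s t hst hP).1 (by linear_combination h2)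
        · intro he
          have he' : sig q (y s) = -(sig q (y t)) + 1 := he
          have hsum : sig q (y s) + sig q (y t) = 1 := by rw [he']; ring
          have h2 := (A2 hq3 _ _).mp hsum
          rw [hxy, hxy] at h2
          exact (hy4 s t hst hP).2 (by linear_combination h2)
  rw [← himg, Set.ncard_image_of_injective _ hinj]
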